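/- For any sequence (z_i)_{i≥1} of positive integers, let π̃ : {1,2,...} → {1,2,...} be defined inductively by letting π̃(i) be the z_i-th smallest element of {1,2,...} \ {π̃(1),...,π̃(i-1)}, and let (m_n)_{n≥0} be defined by m_0 = 0 and m_n = max(m_{n-1}, z_n) - 1. Then for every n ≥ 1, m_n = max_{1 ≤ j ≤ n} π̃(j) - n. Consequently, when (z_i) = (Z_i) is an i.i.d. Geometric(1-q) sequence (0 < q < 1), the first return time R_0^+ = min{k > 0 : M_k = 0} of the chain M_n = max(M_{n-1}, Z_n) - 1 started at M_0 = 0 has the same distribution as the first regeneration time T_1 = min{j ≥ 1 : π̃ built from (Z_i) maps {1,...,j} onto itself}. -/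

import Mathlib

open MeasureTheory

noncomputable section

/-- The insertion process built from a sequence `z` of positive integers (indexed
from 1; the value at index 0 is junk): `insertProc z i` is the `z i`-th smallest
element of `{1,2,...} \ {insertProc z 1, ..., insertProc z (i-1)}`. -/
noncomputable def insertProc (z : ℕ → ℕ) (i : ℕ) : ℕ :=
  if i = 0 then 0
  else Nat.nth (fun m => 1 ≤ m ∧ ∀ j, j < i → insertProc z j ≠ m) (z i - 1)
termination_by i

/-- The chain `m_0 = m0`, `m_n = max (m_{n-1}, z_n) - 1`. -/
def chainM (m0 : ℕ) (z : ℕ → ℕ) : ℕ → ℕ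
  | 0 => m0
  | n + 1 => max (chainM m0 z n) (z (n + 1)) - 1

namespace InsertAux

/-- The set of available values at step `i`. -/
def pset (z : ℕ → ℕ) (i : ℕ) : ℕ → Prop :=
  fun m => 1 ≤ m ∧ ∀ j, j < i → insertProc z j ≠ m

lemma pset_infinite (z : ℕ → ℕ) (i : ℕ) : (setOf (pset z i)).Infinite := by
  have h : Set.Ioi ((Finset.range i).sup (insertProc z)) ⊆ setOf (pset z i) := by
    intro m hm
    simp only [Set.mem_Ioi] at hm
    refine ⟨by omega, fun j hj hne => ?_⟩
    have : insertProc z j ≤ (Finset.range i).sup (insertProc z) :=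
      Finset.le_sup (Finset.mem_range.mpr hj)
    omega
  exact (Set.Ioi_infinite _).mono h

lemma insertProc_zero (z : ℕ → ℕ) : insertProc z 0 = 0 := by
  rw [insertProc]; simp

lemma insertProc_eq (z : ℕ → ℕ) (i : ℕ) (hi : i ≠ 0) :
    insertProc z i = Nat.nth (pset z i) (z i - 1) := by
  rw [insertProc, if_neg hi]; rfl

lemma insertProc_spec (z : ℕ → ℕ) (i : ℕ) (hi : i ≠ 0) :
    pset z i (insertProc z i) := by
  rw [insertProc_eq z i hi]
  exact Nat.nth_mem_of_infinite (pset_infinite z i) _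

lemma one_le_insertProc (z : ℕ → ℕ) (i : ℕ) (hi : i ≠ 0) : 1 ≤ insertProc z i :=
  (insertProc_spec z i hi).1

lemma injOn_insertProc (z : ℕ → ℕ) (n : ℕ) :
    Set.InjOn (insertProc z) (Finset.Icc 1 n : Finset ℕ) := by
  intro a ha b hb hab
  simp only [Finset.coe_Icc, Set.mem_Icc] at ha hb
  rcases lt_trichotomy a b with h | h | h
  · exact absurd hab ((insertProc_spec z b (by omega)).2 a h)
  · exact h
  · exact absurd hab.symm ((insertProc_spec z a (by omega)).2 b h)

lemma le_sup_self (z : ℕ → ℕ) (n : ℕ) : n ≤ (Finset.Icc 1 n).sup (insertProc z) := by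
  rcases Nat.eq_zero_or_pos n with h | h
  · simp [h]
  classical
  have hsub : (Finset.Icc 1 n).image (insertProc z)
      ⊆ Finset.Icc 1 ((Finset.Icc 1 n).sup (insertProc z)) := by
    intro m hm
    simp only [Finset.mem_image] at hm
    obtain ⟨j, hj, rfl⟩ := hm
    simp only [Finset.mem_Icc] at hj ⊢
    exact ⟨one_le_insertProc z j (by omega), Finset.le_sup (Finset.mem_Icc.mpr hj)⟩
  have hcard := Finset.card_le_card hsub
  rw [Finset.card_image_of_injOn (injOn_insertProc z n), Nat.card_Icc, Nat.card_Icc] at hcard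
  omega

lemma values_le_sup (z : ℕ → ℕ) (n j : ℕ) (h1 : 1 ≤ j) (h2 : j ≤ n) :
    insertProc z j ≤ (Finset.Icc 1 n).sup (insertProc z) :=
  Finset.le_sup (by simp [Finset.mem_Icc]; omega)

/-- Key step: the sup recursion. -/
lemma sup_succ (z : ℕ → ℕ) (hz : ∀ i, 1 ≤ z i) (n : ℕ) :
    (Finset.Icc 1 (n + 1)).sup (insertProc z)
      = max ((Finset.Icc 1 n).sup (insertProc z)) (n + z (n + 1)) := by
  classical
  set S := (Finset.Icc 1 n).sup (insertProc z) with hSdef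
  set p := pset z (n + 1) with hpdef
  have hinf := pset_infinite z (n + 1)
  have hSn : n ≤ S := le_sup_self z n
  have hptail : ∀ m, S < m → p m := by
    intro m hm
    refine ⟨by omega, fun j hj hne => ?_⟩
    rcases Nat.eq_zero_or_pos j with h0 | h0
    · rw [h0, insertProc_zero] at hne; omega
    · have := values_le_sup z n j h0 (by omega); omega
  -- count of p below S+1 is S - n
  have hbase : Nat.count p (S + 1) = S - n := by
    rw [Nat.count_eq_card_filter_range]
    have hfe : (Finset.range (S + 1)).filter p
        = Finset.Icc 1 S \ (Finset.Icc 1 n).image (insertProc z) := by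
      ext m
      simp only [Finset.mem_filter, Finset.mem_range, Finset.mem_sdiff, Finset.mem_Icc]
      constructor
      · rintro ⟨hm, h1, h2⟩
        refine ⟨⟨h1, by omega⟩, ?_⟩
        intro hmem
        obtain ⟨j, hj, hje⟩ := Finset.mem_image.mp hmem
        simp only [Finset.mem_Icc] at hj
        exact h2 j (by omega) hje
      · rintro ⟨⟨h1, h2⟩, h3⟩
        refine ⟨by omega, h1, fun j hj hne => ?_⟩
        rcases Nat.eq_zero_or_pos j with h0 | h0
        · rw [h0, insertProc_zero] at hne; omega
        · exact h3 (Finset.mem_image.mpr ⟨j, Finset.mem_Icc.mpr ⟨h0, by omega⟩, hne⟩)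
    have hsub : (Finset.Icc 1 n).image (insertProc z) ⊆ Finset.Icc 1 S := by
      intro m hm
      simp only [Finset.mem_image] at hm
      obtain ⟨j, hj, rfl⟩ := hm
      simp only [Finset.mem_Icc] at hj ⊢
      exact ⟨one_le_insertProc z j (by omega), values_le_sup z n j hj.1 hj.2⟩
    rw [hfe, Finset.card_sdiff_of_subset hsub, Finset.card_image_of_injOn (injOn_insertProc z n),
      Nat.card_Icc, Nat.card_Icc]
    omega
  have hcount : ∀ t, Nat.count p (S + 1 + t) = (S - n) + t := by
    intro t
    induction t with
    | zero => simpa using hbase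
    | succ t ih =>
      have : S + 1 + (t + 1) = (S + 1 + t) + 1 := by omega
      rw [this, Nat.count_succ, ih, if_pos (hptail _ (by omega))]
      omega
  have hnth : ∀ t, Nat.nth p ((S - n) + t) = S + 1 + t := by
    intro t
    have hp := hptail (S + 1 + t) (by omega)
    have := Nat.nth_count hp
    rwa [hcount t] at this
  have hπ : insertProc z (n + 1) = Nat.nth p (z (n + 1) - 1) :=
    insertProc_eq z (n + 1) (by omega)
  have hIcc : Finset.Icc 1 (n + 1) = insert (n + 1) (Finset.Icc 1 n) :=
    (Finset.insert_Icc_right_eq_Icc_add_one (by omega)).symm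
  rw [hIcc, Finset.sup_insert]
  rcases le_or_gt (S - n) (z (n + 1) - 1) with hk | hk
  · have hval : insertProc z (n + 1) = n + z (n + 1) := by
      have h1 : z (n + 1) - 1 = (S - n) + (z (n + 1) - 1 - (S - n)) := by omega
      rw [hπ, h1, hnth]
      have := hz (n + 1); omega
    rw [hval]
    have := hz (n + 1); omega
  · have hlt : Nat.nth p (z (n + 1) - 1) < Nat.nth p ((S - n) + 0) :=
      (Nat.nth_lt_nth hinf).mpr (by omega)
    rw [hnth 0] at hlt
    have hle : insertProc z (n + 1) ≤ S := by rw [hπ]; omega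
    have := hz (n + 1)
    omega

lemma chainM_eq (z : ℕ → ℕ) (hz : ∀ i, 1 ≤ z i) (n : ℕ) :
    chainM 0 z n = (Finset.Icc 1 n).sup (insertProc z) - n := by
  induction n with
  | zero => simp [chainM]
  | succ n ih =>
    have hS := sup_succ z hz n
    have hSn := le_sup_self z n
    have hz' := hz (n + 1)
    show max (chainM 0 z n) (z (n + 1)) - 1 = _
    rw [ih, hS]
    omega

lemma sup_id_Icc (k : ℕ) (hk : 0 < k) : (Finset.Icc 1 k).sup id = k := by
  refine le_antisymm (Finset.sup_le fun m hm => (Finset.mem_Icc.mp hm).2) ?_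
  exact Finset.le_sup (f := id) (by simp [Finset.mem_Icc]; omega)

lemma chain_zero_iff (z : ℕ → ℕ) (hz : ∀ i, 1 ≤ z i) (k : ℕ) (hk : 0 < k) :
    chainM 0 z k = 0 ↔ (Finset.Icc 1 k).image (insertProc z) = Finset.Icc 1 k := by
  classical
  rw [chainM_eq z hz k]
  have hSk := le_sup_self z k
  constructor
  · intro h
    have hS : (Finset.Icc 1 k).sup (insertProc z) = k := by omega
    refine Finset.eq_of_subset_of_card_le ?_ ?_
    · intro m hm
      simp only [Finset.mem_image] at hm
      obtain ⟨j, hj, rfl⟩ := hm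
      simp only [Finset.mem_Icc] at hj ⊢
      exact ⟨one_le_insertProc z j (by omega), hS ▸ values_le_sup z k j hj.1 hj.2⟩
    · rw [Finset.card_image_of_injOn (injOn_insertProc z k)]
  · intro h
    have h1 : (Finset.Icc 1 k).sup (insertProc z)
        = ((Finset.Icc 1 k).image (insertProc z)).sup id := by
      rw [Finset.sup_image]; rfl
    rw [h, sup_id_Icc k hk] at h1
    omega

end InsertAux

/-- **The Markov chain records the insertion process, and the return time to 0 has the
law of the first regeneration time.** (i) For any sequence `(z_i)_{i≥1}` of positive
integers, the chain `m_n = max(m_{n-1}, z_n) - 1` started from `m_0 = 0` satisfies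
`m_n = max_{1 ≤ j ≤ n} π̃(j) - n` for all `n ≥ 1`, where `π̃` is the insertion process
built from `z`. (ii) Consequently, when the `z` are i.i.d. Geometric(1-q) random
variables, `R_0^+ = min{k > 0 : M_k = 0}` has the same distribution as
`T_1 = min{j ≥ 1 : π̃ maps {1,...,j} onto itself}`. -/
theorem chain_eq_max_and_return_time_dist
    {Ω : Type*} [MeasurableSpace Ω] (P : Measure Ω) [IsProbabilityMeasure P]
    (q : ℝ) (hq0 : 0 < q) (hq1 : q < 1)
    (Z : ℕ → Ω → ℕ)
    (hmeas : ∀ i, Measurable (Z i))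
    (hindep : ProbabilityTheory.iIndepFun Z P)
    (hposZ : ∀ i ω, 1 ≤ Z i ω)
    (hgeom : ∀ i k, 1 ≤ k →
      P {ω | Z i ω = k} = ENNReal.ofReal ((1 - q) * q ^ (k - 1))) :
    (∀ z : ℕ → ℕ, (∀ i, 1 ≤ z i) → ∀ n : ℕ, 1 ≤ n →
        chainM 0 z n = (Finset.Icc 1 n).sup (insertProc z) - n)
      ∧ Measure.map
          (fun ω => sInf {k | 0 < k ∧ chainM 0 (fun i => Z i ω) k = 0}) P
        = Measure.map
          (fun ω => sInf {j | 0 < j ∧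
            (Finset.Icc 1 j).image (insertProc (fun i => Z i ω)) = Finset.Icc 1 j}) P := by
  constructor
  · intro z hz n _
    exact InsertAux.chainM_eq z hz n
  · have hfun : (fun ω => sInf {k | 0 < k ∧ chainM 0 (fun i => Z i ω) k = 0})
        = fun ω => sInf {j | 0 < j ∧
            (Finset.Icc 1 j).image (insertProc (fun i => Z i ω)) = Finset.Icc 1 j} := by
      funext ω
      congr 1
      ext k
      simp only [Set.mem_setOf_eq]
      constructor
      · rintro ⟨hk, h⟩
        exact ⟨hk, (InsertAux.chain_zero_iff _ (fun i => hposZ i ω) k hk).mp h⟩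
      · rintro ⟨hk, h⟩
        exact ⟨hk, (InsertAux.chain_zero_iff _ (fun i => hposZ i ω) k hk).mpr h⟩
    rw [hfun]

end
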